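/- arXiv:math/0602125 — 2 statements merged into one kernel-verified Lean document; each statement's English description precedes it below -/
import Mathlib

section
/- Let G be a finite group, K a Carter subgroup of G, z ∈ Z(K) with z ≠ e, and suppose any two Carter subgroups of C_G(z) are conjugate in C_G(z). If H is a Carter subgroup of G not conjugate to K in G, then no conjugate of z lies in Z(H). -/
open Pointwise

/-- A Carter subgroup: a nilpotent self-normalizing subgroup. -/
def IsCarter {G : Type*} [Group G] (H : Subgroup G) : Prop :=
  Group.IsNilpotent H ∧ Subgroup.normalizer (H : Set G) = H

lemma smul_eq_map_aux {G : Type*} [Group G] (f : MulAut G) (H : Subgroup G) :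
    f • H = H.map f.toMonoidHom := by
  ext g
  rw [Subgroup.mem_pointwise_smul_iff_inv_smul_mem, Subgroup.mem_map]
  constructor
  · intro h; exact ⟨f⁻¹ g, h, by simp⟩
  · rintro ⟨y, hy, rfl⟩; simpa using hy

lemma isCarter_smul {G : Type*} [Group G] (x : G) (H : Subgroup G) (hH : IsCarter H) :
    IsCarter (MulAut.conj x • H) := by
  constructor
  · haveI := hH.1
    exact nilpotent_of_surjective ((Subgroup.equivSMul (MulAut.conj x) H).toMonoidHom)
      (Subgroup.equivSMul (MulAut.conj x) H).surjective
  · rw [smul_eq_map_aux, ← Subgroup.map_equiv_normalizer_eq, hH.2]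

lemma isCarter_subgroupOf {G : Type*} [Group G] {C K : Subgroup G} (hKC : K ≤ C)
    (hK : IsCarter K) : IsCarter (K.subgroupOf C) := by
  constructor
  · haveI := hK.1
    exact nilpotent_of_surjective ((Subgroup.subgroupOfEquivOfLe hKC).symm.toMonoidHom)
      (Subgroup.subgroupOfEquivOfLe hKC).symm.surjective
  · refine le_antisymm (fun c hc => ?_) Subgroup.le_normalizer
    rw [Subgroup.mem_normalizer_iff] at hc
    have hcK : (c : G) ∈ K := by
      rw [← hK.2, Subgroup.mem_normalizer_iff]
      intro g
      constructor
      · intro hg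
        have := (hc ⟨g, hKC hg⟩).mp (by simpa [Subgroup.mem_subgroupOf] using hg)
        simpa [Subgroup.mem_subgroupOf] using this
      · intro hg
        have hgC : g ∈ C := by
          have : (c : G) * g * (c : G)⁻¹ ∈ C := hKC hg
          have := mul_mem (mul_mem (inv_mem c.2) this) c.2
          simpa [mul_assoc] using this
        have := (hc ⟨g, hgC⟩).mpr (by simpa [Subgroup.mem_subgroupOf] using hg)
        simpa [Subgroup.mem_subgroupOf] using this
    simpa [Subgroup.mem_subgroupOf] using hcK

theorem no_conjugate_in_center_of_nonconjugate_carter {G : Type*} [Group G] [Finite G]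
    (K : Subgroup G) (hK : IsCarter K) (z : G) (hz : z ≠ 1)
    (hzK : z ∈ K) (hzc : ∀ k ∈ K, k * z = z * k)
    (hconj : ∀ K₁ K₂ : Subgroup (Subgroup.centralizer {z} : Subgroup G),
      IsCarter K₁ → IsCarter K₂ →
        ∃ c : (Subgroup.centralizer {z} : Subgroup G), MulAut.conj c • K₁ = K₂)
    (H : Subgroup G) (hH : IsCarter H)
    (hnc : ¬∃ x : G, MulAut.conj x • K = H) :
    ∀ x : G, ¬(x⁻¹ * z * x ∈ H ∧ ∀ h ∈ H, h * (x⁻¹ * z * x) = (x⁻¹ * z * x) * h) := by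
  rintro x ⟨hmem, hcomm⟩
  set C : Subgroup G := Subgroup.centralizer {z} with hC
  set H' : Subgroup G := MulAut.conj x • H with hH'
  -- K ≤ C
  have hKC : K ≤ C := fun k hk => Subgroup.mem_centralizer_iff.mpr
    (by rintro y rfl; exact (hzc k hk).symm)
  -- H' ≤ C
  have hH'C : H' ≤ C := by
    intro g hg
    rw [hH', Subgroup.mem_pointwise_smul_iff_inv_smul_mem] at hg
    have hg' : x⁻¹ * g * x ∈ H := by
      simpa [MulAut.smul_def, mul_assoc] using hg
    refine Subgroup.mem_centralizer_iff.mpr ?_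
    intro y hy
    rw [Set.mem_singleton_iff] at hy
    rw [hy]
    have := hcomm _ hg'
    -- (x⁻¹gx)(x⁻¹zx) = (x⁻¹zx)(x⁻¹gx)  ⇒  g z = z g ⇒ z * g = g * z
    have h2 := congrArg (fun t => x * t * x⁻¹) this
    simp only [mul_assoc] at h2
    group at h2
    exact h2.symm
  have hK' : IsCarter (K.subgroupOf C) := isCarter_subgroupOf hKC hK
  have hH2 : IsCarter (H'.subgroupOf C) := isCarter_subgroupOf hH'C (isCarter_smul x H hH)
  obtain ⟨c, hc⟩ := hconj _ _ hK' hH2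
  apply hnc
  refine ⟨x⁻¹ * (c : G), ?_⟩
  -- show conj (x⁻¹ * c) • K = H
  have hmap : MulAut.conj (c : G) • K = H' := by
    ext g
    constructor
    · intro hg
      rw [Subgroup.mem_pointwise_smul_iff_inv_smul_mem] at hg
      have hg' : (c : G)⁻¹ * g * (c : G) ∈ K := by
        simpa [MulAut.smul_def, mul_assoc] using hg
      have hgC : g ∈ C := by
        have := mul_mem (mul_mem c.2 (hKC hg')) (inv_mem c.2)
        simpa [mul_assoc] using this
      have : (⟨g, hgC⟩ : C) ∈ H'.subgroupOf C := by
        rw [← hc, Subgroup.mem_pointwise_smul_iff_inv_smul_mem]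
        simp only [Subgroup.mem_subgroupOf, MulAut.smul_def, MulAut.conj_inv_apply]
        simpa [mul_assoc] using hg'
      simpa [Subgroup.mem_subgroupOf] using this
    · intro hg
      have hgC : g ∈ C := hH'C hg
      have : (⟨g, hgC⟩ : C) ∈ (MulAut.conj c • K.subgroupOf C) := by
        rw [hc]; simpa [Subgroup.mem_subgroupOf] using hg
      rw [Subgroup.mem_pointwise_smul_iff_inv_smul_mem] at this
      simp only [Subgroup.mem_subgroupOf, MulAut.smul_def, MulAut.conj_inv_apply] at this
      rw [Subgroup.mem_pointwise_smul_iff_inv_smul_mem]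
      simp only [MulAut.smul_def, MulAut.conj_inv_apply]
      exact_mod_cast this
  have : MulAut.conj (x⁻¹ * (c : G)) • K = MulAut.conj x⁻¹ • (MulAut.conj (c : G) • K) := by
    rw [map_mul, mul_smul]
  rw [this, hmap, hH', ← mul_smul, ← map_mul, inv_mul_cancel, map_one, one_smul]
end

section
/- Let G be a finite group, K a Carter subgroup of G, and z ∈ Z(K), z ≠ e, such that Carter subgroups of C_G(z) are conjugate in C_G(z). Then C_G(z) is self-normalizing in G. -/
open Pointwise

lemma normalizer_conj_smul {G : Type*} [Group G] (x : G) (K : Subgroup G) :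
    Subgroup.normalizer ((MulAut.conj x • K : Subgroup G) : Set G) =
      MulAut.conj x • Subgroup.normalizer (K : Set G) := by
  have h : ∀ S : Subgroup G, MulAut.conj x • S = S.map (MulAut.conj x).toMonoidHom := by
    intro S
    rfl
  rw [h, h, Subgroup.map_equiv_normalizer_eq K (MulAut.conj x)]

lemma carter_conj_smul {G : Type*} [Group G] (x : G) {K : Subgroup G} (hK : IsCarter K) :
    IsCarter (MulAut.conj x • K) := by
  refine ⟨?_, ?_⟩
  · exact nilpotent_of_mulEquiv (Subgroup.equivSMul (MulAut.conj x) K) (_h := hK.1)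
  · rw [normalizer_conj_smul, hK.2]

lemma carter_subgroupOf {G : Type*} [Group G] {C H : Subgroup G} (hH : H ≤ C)
    (h : IsCarter H) : IsCarter (H.subgroupOf C) := by
  refine ⟨nilpotent_of_mulEquiv (Subgroup.subgroupOfEquivOfLe hH).symm (_h := h.1), ?_⟩
  refine le_antisymm ?_ Subgroup.le_normalizer
  intro x hx
  simp only [Subgroup.mem_normalizer_iff] at hx
  have hxN : (x : G) ∈ Subgroup.normalizer (H : Set G) := by
    rw [Subgroup.mem_normalizer_iff]
    intro g
    constructor
    · intro hg
      have := (hx ⟨g, hH hg⟩).mp (by simpa [Subgroup.mem_subgroupOf] using hg)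
      simpa [Subgroup.mem_subgroupOf] using this
    · intro hg
      have hgC : g ∈ C := by
        have : (x : G) * g * (x : G)⁻¹ ∈ C := hH hg
        have := C.mul_mem (C.mul_mem (C.inv_mem x.2) this) x.2
        simpa [mul_assoc] using this
      have := (hx ⟨g, hgC⟩).mpr (by simpa [Subgroup.mem_subgroupOf] using hg)
      simpa [Subgroup.mem_subgroupOf] using this
  rw [h.2] at hxN
  simpa [Subgroup.mem_subgroupOf] using hxN

theorem centralizer_self_normalizing {G : Type*} [Group G] [Finite G]
    (K : Subgroup G) (hK : IsCarter K) (z : G) (hz : z ≠ 1)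
    (hzK : z ∈ K) (hzc : ∀ k ∈ K, k * z = z * k)
    (hconj : ∀ K₁ K₂ : Subgroup (Subgroup.centralizer {z} : Subgroup G),
      IsCarter K₁ → IsCarter K₂ →
        ∃ c : (Subgroup.centralizer {z} : Subgroup G), MulAut.conj c • K₁ = K₂) :
    Subgroup.normalizer ((Subgroup.centralizer {z} : Subgroup G) : Set G) =
      (Subgroup.centralizer {z} : Subgroup G) := by
  set C := (Subgroup.centralizer {z} : Subgroup G) with hC
  have hKC : K ≤ C := by
    intro k hk
    rw [Subgroup.mem_centralizer_iff]
    intro g hg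
    rw [Set.mem_singleton_iff] at hg
    subst hg
    exact (hzc k hk).symm
  refine le_antisymm ?_ Subgroup.le_normalizer
  intro x hx
  rw [Subgroup.mem_normalizer_iff] at hx
  have hxKC : MulAut.conj x • K ≤ C := by
    intro g hg
    rw [Subgroup.mem_pointwise_smul_iff_inv_smul_mem] at hg
    simp only [MulAut.smul_def, MulAut.conj_inv_apply] at hg
    have := (hx (x⁻¹ * g * x)).mp (hKC hg)
    convert this using 1
    group
  obtain ⟨c, hc⟩ := hconj ((MulAut.conj x • K).subgroupOf C) (K.subgroupOf C)
    (carter_subgroupOf hxKC (carter_conj_smul x hK))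
    (carter_subgroupOf hKC hK)
  have hw : (c : G) * x ∈ Subgroup.normalizer (K : Set G) := by
    rw [Subgroup.mem_normalizer_iff]
    intro h
    constructor
    · intro hh
      have h1 : x * h * x⁻¹ ∈ MulAut.conj x • K := by
        rw [Subgroup.mem_pointwise_smul_iff_inv_smul_mem]
        simp only [MulAut.smul_def, MulAut.conj_inv_apply]
        convert hh using 1
        group
      have h2 : (⟨x * h * x⁻¹, hxKC h1⟩ : C) ∈ (MulAut.conj x • K).subgroupOf C := by
        simpa [Subgroup.mem_subgroupOf] using h1
      have h3 : MulAut.conj c • (⟨x * h * x⁻¹, hxKC h1⟩ : C) ∈ K.subgroupOf C := by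
        rw [← hc]
        exact Subgroup.smul_mem_pointwise_smul _ _ _ h2
      simp only [Subgroup.mem_subgroupOf, MulAut.smul_def, MulAut.conj_apply] at h3
      convert h3 using 1
      push_cast
      group
    · intro hh
      have hhC : (c : G) * x * h * ((c : G) * x)⁻¹ ∈ C := hKC hh
      have h2 : (⟨(c : G) * x * h * ((c : G) * x)⁻¹, hhC⟩ : C) ∈ K.subgroupOf C := by
        simpa [Subgroup.mem_subgroupOf] using hh
      rw [← hc, Subgroup.mem_pointwise_smul_iff_inv_smul_mem] at h2
      simp only [Subgroup.mem_subgroupOf, MulAut.smul_def, MulAut.conj_inv_apply] at h2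
      have h3 : x * h * x⁻¹ ∈ MulAut.conj x • K := by
        convert h2 using 1
        push_cast
        group
      rw [Subgroup.mem_pointwise_smul_iff_inv_smul_mem] at h3
      simp only [MulAut.smul_def, MulAut.conj_inv_apply] at h3
      convert h3 using 1
      group
  rw [hK.2] at hw
  have : (↑c)⁻¹ * ((c : G) * x) ∈ C := C.mul_mem (C.inv_mem c.2) (hKC hw)
  simpa using this
end
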